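/- The image of the evaluation/substitution map sending a supersymmetric polynomial f ∈ k[x_1,...,x_m,y_1,...,y_n] to the polynomial obtained by setting x_m = T, y_n = -T is contained in the supersymmetric polynomials in k[x_1,...,x_{m-1},y_1,...,y_{n-1}]: i.e., if f is supersymmetric in m + n variables, then f|_{x_m = T, y_n = -T} is independent of T and is a supersymmetric polynomial in the remaining m - 1 + n - 1 variables. -/

import Mathlib

open MvPolynomial

/-- The substitution `x₁ = T, y₁ = -T` (other variables untouched), landing in
polynomials in `T` over the polynomial ring. -/
noncomputable def subst (k : Type*) [Field k] (m n : ℕ) :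
    MvPolynomial (Fin (m + 1) ⊕ Fin (n + 1)) k →ₐ[k]
      Polynomial (MvPolynomial (Fin (m + 1) ⊕ Fin (n + 1)) k) :=
  aeval (fun v => if v = Sum.inl 0 then Polynomial.X
    else if v = Sum.inr 0 then -Polynomial.X
    else Polynomial.C (X v))

/-- Symmetric in the `x`-variables. -/
def SymX (k : Type*) [Field k] (m n : ℕ)
    (f : MvPolynomial (Fin (m + 1) ⊕ Fin (n + 1)) k) : Prop :=
  ∀ σ : Equiv.Perm (Fin (m + 1)), rename (Sum.map σ id) f = f

/-- Symmetric in the `y`-variables. -/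
def SymY (k : Type*) [Field k] (m n : ℕ)
    (f : MvPolynomial (Fin (m + 1) ⊕ Fin (n + 1)) k) : Prop :=
  ∀ τ : Equiv.Perm (Fin (n + 1)), rename (Sum.map id τ) f = f

/-- Supersymmetric polynomial. -/
def SuperSym (k : Type*) [Field k] (m n : ℕ)
    (f : MvPolynomial (Fin (m + 1) ⊕ Fin (n + 1)) k) : Prop :=
  SymX k m n f ∧ SymY k m n f ∧ ∃ c, subst k m n f = Polynomial.C c

/-- The substitution `x_m = T, y_n = -T` (the last variables), landing in
polynomials in `T` over the polynomial ring in the remaining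
`(m-1) + (n-1)` variables. -/
noncomputable def substLast (k : Type*) [Field k] (m n : ℕ) :
    MvPolynomial (Fin (m + 2) ⊕ Fin (n + 2)) k →ₐ[k]
      Polynomial (MvPolynomial (Fin (m + 1) ⊕ Fin (n + 1)) k) :=
  aeval (fun v => match v with
    | Sum.inl i => if h : (i : ℕ) < m + 1 then
        Polynomial.C (X (Sum.inl ⟨i, h⟩)) else Polynomial.X
    | Sum.inr j => if h : (j : ℕ) < n + 1 then
        Polynomial.C (X (Sum.inr ⟨j, h⟩)) else -Polynomial.X)

/-- Forgetting the first `x`/`y` variables (sending them to arbitrary values). -/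
noncomputable def phi (k : Type*) [Field k] (m n : ℕ) :
    MvPolynomial (Fin (m + 2) ⊕ Fin (n + 2)) k →ₐ[k]
      MvPolynomial (Fin (m + 1) ⊕ Fin (n + 1)) k :=
  aeval (fun v => match v with
    | Sum.inl i => if h : (i : ℕ) < m + 1 then X (Sum.inl ⟨i, h⟩) else X (Sum.inl 0)
    | Sum.inr j => if h : (j : ℕ) < n + 1 then X (Sum.inr ⟨j, h⟩) else X (Sum.inr 0))

lemma lemA (k : Type*) [Field k] (m n : ℕ) :
    (substLast k m n).comp (rename (Sum.map (Equiv.swap 0 (Fin.last (m+1)))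
        (Equiv.swap 0 (Fin.last (n+1)))))
      = (Polynomial.mapAlgHom (phi k m n)).comp (subst k (m+1) (n+1)) := by
  apply MvPolynomial.algHom_ext
  rintro (i | j)
  · by_cases hi0 : i = 0
    · subst hi0
      simp [substLast, subst, phi, Equiv.swap_apply_left, Fin.last]
    · by_cases hil : i = Fin.last (m+1)
      · subst hil
        have h0 : (Fin.last (m+1) : Fin (m+2)) ≠ 0 := by
          simp [Fin.ext_iff, Fin.last]
        simp [substLast, subst, phi, Equiv.swap_apply_right, h0, Fin.last,
          Fin.ext_iff]
      · have hlt : (i : ℕ) < m + 1 := by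
          have := Fin.lt_last_iff_ne_last.mpr hil
          simpa [Fin.lt_iff_val_lt_val, Fin.last] using this
        simp [substLast, subst, phi, Equiv.swap_apply_of_ne_of_ne hi0 hil, hi0, hlt, Nat.lt_succ_iff.mp hlt]
  · by_cases hi0 : j = 0
    · subst hi0
      simp [substLast, subst, phi, Equiv.swap_apply_left, Fin.last]
    · by_cases hil : j = Fin.last (n+1)
      · subst hil
        have h0 : (Fin.last (n+1) : Fin (n+2)) ≠ 0 := by
          simp [Fin.ext_iff, Fin.last]
        simp [substLast, subst, phi, Equiv.swap_apply_right, h0, Fin.last,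
          Fin.ext_iff]
      · have hlt : (j : ℕ) < n + 1 := by
          have := Fin.lt_last_iff_ne_last.mpr hil
          simpa [Fin.lt_iff_val_lt_val, Fin.last] using this
        simp [substLast, subst, phi, Equiv.swap_apply_of_ne_of_ne hi0 hil, hi0, hlt, Nat.lt_succ_iff.mp hlt]

def extPerm (m : ℕ) (ρ : Equiv.Perm (Fin (m+1))) : Equiv.Perm (Fin (m+2)) :=
  (finSuccEquivLast.symm).permCongr (Equiv.optionCongr ρ)

@[simp] lemma extPerm_castSucc (m : ℕ) (ρ : Equiv.Perm (Fin (m+1))) (i : Fin (m+1)) :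
    extPerm m ρ (Fin.castSucc i) = Fin.castSucc (ρ i) := by
  simp [extPerm, Equiv.permCongr_apply]

@[simp] lemma extPerm_last (m : ℕ) (ρ : Equiv.Perm (Fin (m+1))) :
    extPerm m ρ (Fin.last (m+1)) = Fin.last (m+1) := by
  simp [extPerm, Equiv.permCongr_apply]

lemma lemBX (k : Type*) [Field k] (m n : ℕ) (ρ : Equiv.Perm (Fin (m+1))) :
    (substLast k m n).comp (rename (Sum.map (extPerm m ρ) id))
      = (Polynomial.mapAlgHom (rename (Sum.map ρ (id : Fin (n+1) → Fin (n+1))))).comp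
          (substLast k m n) := by
  apply MvPolynomial.algHom_ext
  rintro (i | j)
  · induction i using Fin.lastCases with
    | last => simp [substLast]
    | cast i' =>
        have h1 : ((Fin.castSucc i' : Fin (m+2)) : ℕ) < m + 1 := by
          simpa using i'.isLt
        have h2 : ((Fin.castSucc (ρ i') : Fin (m+2)) : ℕ) < m + 1 := by
          simpa using (ρ i').isLt
        simp [substLast, h1, h2, Fin.ext_iff, Nat.lt_succ_iff.mp (ρ i').isLt, Nat.lt_succ_iff.mp i'.isLt]
  · induction j using Fin.lastCases with
    | last => simp [substLast]
    | cast j' =>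
        have h1 : ((Fin.castSucc j' : Fin (n+2)) : ℕ) < n + 1 := by
          simpa using j'.isLt
        simp [substLast, h1, Fin.ext_iff, Nat.lt_succ_iff.mp j'.isLt]

lemma lemBY (k : Type*) [Field k] (m n : ℕ) (τ : Equiv.Perm (Fin (n+1))) :
    (substLast k m n).comp (rename (Sum.map id (extPerm n τ)))
      = (Polynomial.mapAlgHom (rename (Sum.map (id : Fin (m+1) → Fin (m+1)) τ))).comp
          (substLast k m n) := by
  apply MvPolynomial.algHom_ext
  rintro (i | j)
  · induction i using Fin.lastCases with
    | last => simp [substLast]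
    | cast i' =>
        have h1 : ((Fin.castSucc i' : Fin (m+2)) : ℕ) < m + 1 := by
          simpa using i'.isLt
        simp [substLast, h1, Fin.ext_iff, Nat.lt_succ_iff.mp i'.isLt]
  · induction j using Fin.lastCases with
    | last => simp [substLast]
    | cast j' =>
        have h1 : ((Fin.castSucc j' : Fin (n+2)) : ℕ) < n + 1 := by
          simpa using j'.isLt
        have h2 : ((Fin.castSucc (τ j') : Fin (n+2)) : ℕ) < n + 1 := by
          simpa using (τ j').isLt
        simp [substLast, h1, h2, Fin.ext_iff, Nat.lt_succ_iff.mp (τ j').isLt, Nat.lt_succ_iff.mp j'.isLt]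

/-- Swap of the two polynomial variables in `R[X][X]`. -/
noncomputable def swr (S : Type*) [CommSemiring S] :
    Polynomial (Polynomial S) →+* Polynomial (Polynomial S) :=
  Polynomial.eval₂RingHom
    (Polynomial.eval₂RingHom (Polynomial.C.comp Polynomial.C) Polynomial.X)
    (Polynomial.C Polynomial.X)

set_option maxHeartbeats 1000000 in
set_option synthInstance.maxHeartbeats 400000 in
lemma lemSwap (k : Type*) [Field k] (m n : ℕ) :
    (swr (MvPolynomial (Fin (m+1) ⊕ Fin (n+1)) k)).comp
        ((Polynomial.mapRingHom (substLast k m n).toRingHom).comp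
          (subst k (m+1) (n+1)).toRingHom)
      = (Polynomial.mapRingHom (subst k m n).toRingHom).comp
          (substLast k m n).toRingHom := by
  apply MvPolynomial.ringHom_ext
  · intro a
    simp [subst, substLast, swr, Polynomial.eval₂_C, algebraMap_eq]
  · rintro (i | j)
    · by_cases hi0 : i = 0
      · subst hi0
        simp [substLast, subst, swr, Fin.ext_iff, Polynomial.eval₂_neg]
      · by_cases hil : i = Fin.last (m+1)
        · subst hil
          have h0 : (Fin.last (m+1) : Fin (m+2)) ≠ 0 := by
            simp [Fin.ext_iff, Fin.last]
          simp [substLast, subst, swr, h0, Fin.last, Fin.ext_iff, Polynomial.eval₂_neg]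
        · have hlt : (i : ℕ) < m + 1 := by
            have := Fin.lt_last_iff_ne_last.mpr hil
            simpa [Fin.lt_iff_val_lt_val, Fin.last] using this
          have hne : (⟨(i : ℕ), hlt⟩ : Fin (m+1)) ≠ 0 := by
            intro h; apply hi0; rw [Fin.ext_iff] at h ⊢; simpa using h
          simp [substLast, subst, swr, hi0, hlt, hne, Nat.lt_succ_iff.mp hlt]
    · by_cases hi0 : j = 0
      · subst hi0
        simp [substLast, subst, swr, Fin.ext_iff, Polynomial.eval₂_neg]
        exact (map_neg (swr (MvPolynomial (Fin (m+1) ⊕ Fin (n+1)) k))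
          Polynomial.X).trans (by simp [swr])
      · by_cases hil : j = Fin.last (n+1)
        · subst hil
          have h0 : (Fin.last (n+1) : Fin (n+2)) ≠ 0 := by
            simp [Fin.ext_iff, Fin.last]
          simp [substLast, subst, swr, h0, Fin.last, Fin.ext_iff, Polynomial.eval₂_neg]
          exact (map_neg (swr (MvPolynomial (Fin (m+1) ⊕ Fin (n+1)) k))
            (Polynomial.C Polynomial.X)).trans (by simp [swr])
        · have hlt : (j : ℕ) < n + 1 := by
            have := Fin.lt_last_iff_ne_last.mpr hil
            simpa [Fin.lt_iff_val_lt_val, Fin.last] using this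
          have hne : (⟨(j : ℕ), hlt⟩ : Fin (n+1)) ≠ 0 := by
            intro h; apply hi0; rw [Fin.ext_iff] at h ⊢; simpa using h
          simp [substLast, subst, swr, hi0, hlt, hne, Nat.lt_succ_iff.mp hlt]

/-- If `f` is supersymmetric in `m + n` variables (`m, n ≥ 2`), then the
substitution `x_m = T, y_n = -T` yields a polynomial independent of `T` which
is a supersymmetric polynomial in the remaining `(m-1) + (n-1)` variables. -/
theorem substLast_supersym (k : Type*) [Field k] [CharZero k] (m n : ℕ)
    (f : MvPolynomial (Fin (m + 2) ⊕ Fin (n + 2)) k)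
    (hf : SuperSym k (m + 1) (n + 1) f) :
    ∃ c : MvPolynomial (Fin (m + 1) ⊕ Fin (n + 1)) k,
      substLast k m n f = Polynomial.C c ∧ SuperSym k m n c := by
  obtain ⟨hX, hY, c₀, hc₀⟩ := hf
  -- invariance under the double swap
  have hren : rename (Sum.map (Equiv.swap 0 (Fin.last (m+1)))
      (Equiv.swap 0 (Fin.last (n+1)))) f = f := by
    have : (Sum.map (Equiv.swap 0 (Fin.last (m+1))) (Equiv.swap 0 (Fin.last (n+1)))
        : Fin (m+2) ⊕ Fin (n+2) → Fin (m+2) ⊕ Fin (n+2))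
        = (Sum.map id (Equiv.swap 0 (Fin.last (n+1)))) ∘
          (Sum.map (Equiv.swap 0 (Fin.last (m+1))) id) := by
      funext v; cases v <;> simp
    rw [this, ← rename_rename, hX, hY]
  have key : substLast k m n f = Polynomial.C (phi k m n c₀) := by
    conv_lhs => rw [← hren]
    have := congrArg (fun g => g f) (lemA k m n)
    simp only [AlgHom.comp_apply] at this
    rw [this, hc₀]
    simp
  refine ⟨phi k m n c₀, key, ?_, ?_, ?_⟩
  · intro ρ
    have := congrArg (fun g => g f) (lemBX k m n ρ)
    simp only [AlgHom.comp_apply] at this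
    rw [hX (extPerm m ρ), key] at this
    rw [Polynomial.coe_mapAlgHom, Polynomial.map_C] at this
    exact Polynomial.C_injective this.symm
  · intro τ
    have := congrArg (fun g => g f) (lemBY k m n τ)
    simp only [AlgHom.comp_apply] at this
    rw [hY (extPerm n τ), key] at this
    rw [Polynomial.coe_mapAlgHom, Polynomial.map_C] at this
    exact Polynomial.C_injective this.symm
  · have hsw := congrArg (fun g => g f) (lemSwap k m n)
    simp only [RingHom.comp_apply] at hsw
    rw [show (subst k (m+1) (n+1)).toRingHom f = subst k (m+1) (n+1) f from rfl,
      hc₀] at hsw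
    rw [show (substLast k m n).toRingHom f = substLast k m n f from rfl, key] at hsw
    simp only [Polynomial.coe_mapRingHom, Polynomial.map_C] at hsw
    rw [show (swr (MvPolynomial (Fin (m+1) ⊕ Fin (n+1)) k))
        (Polynomial.C ((substLast k m n).toRingHom c₀))
        = Polynomial.map Polynomial.C ((substLast k m n).toRingHom c₀) from by
      simp [swr, Polynomial.eval₂_C]; rfl] at hsw
    have := congrArg (fun p => p.coeff 0) hsw
    simp only [Polynomial.coeff_map, Polynomial.coeff_C_zero] at this
    exact ⟨_, this.symm⟩
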